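/- Let E be a complex Hilbert space, let n ≥ 1 and m ≥ 1 be integers, and let γ₁, …, γₙ ∈ Mₘ(ℂ) be self-adjoint unitary matrices that pairwise anticommute (γⱼγₖ = −γₖγⱼ for j ≠ k). Let H = (h_{kj}) and H' = (h'_{kj}) be n×n arrays of bounded linear operators on E whose associated block operators on Eⁿ, defined by (Hx)ⱼ = Σₖ h_{kj} xₖ, are invertible as bounded operators on Eⁿ. For bounded linear operators T₁, …, Tₙ on E define L_H(T) = ‖Σⱼ (Σₖ h_{kj} Tₖ) ⊗ γⱼ‖, the operator norm on Eᵐ of the block operator whose (i, l) block is Σⱼ Σₖ (γⱼ)_{il} h_{kj} Tₖ, and similarly L_{H'}(T). Then |L_H(T) − L_{H'}(T)| ≤ n · ‖1_{Eⁿ} − H' H⁻¹‖ · L_H(T), where ‖1_{Eⁿ} − H' H⁻¹‖ is the operator norm on Eⁿ. -/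

import Mathlib

open Finset
open scoped Matrix ComplexConjugate

section aux
variable {E : Type*} [NormedAddCommGroup E] [InnerProductSpace ℂ E]

local notation "⟪" x ", " y "⟫" => @inner ℂ _ _ x y

private lemma inner_sum_smul_sum_smul {ι : Type*} [Fintype ι] (c d : ι → ℂ) (v w : ι → E) :
    ⟪∑ i, c i • v i, ∑ i, d i • w i⟫
      = ∑ i, ∑ j, conj (c i) * d j * ⟪v i, w j⟫ := by
  rw [sum_inner]
  refine Finset.sum_congr rfl fun i _ => ?_
  rw [inner_sum]
  refine Finset.sum_congr rfl fun j _ => ?_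
  rw [inner_smul_left, inner_smul_right, mul_assoc]

private lemma sum_comm3 {ι κ : Type*} [Fintype ι] [Fintype κ] {M : Type*} [AddCommMonoid M]
    (f : ι → κ → κ → M) :
    ∑ a : ι, ∑ b : κ, ∑ c : κ, f a b c = ∑ b : κ, ∑ c : κ, ∑ a : ι, f a b c := by
  rw [Finset.sum_comm]
  exact Finset.sum_congr rfl fun b _ => Finset.sum_comm

private lemma sum_comm4 {ι κ : Type*} [Fintype ι] [Fintype κ] {M : Type*} [AddCommMonoid M]
    (f : ι → ι → κ → κ → M) :
    ∑ a : ι, ∑ b : ι, ∑ c : κ, ∑ d : κ, f a b c d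
      = ∑ c : κ, ∑ d : κ, ∑ a : ι, ∑ b : ι, f a b c d := by
  have h1 : ∀ a, ∑ b : ι, ∑ c : κ, ∑ d : κ, f a b c d
      = ∑ c : κ, ∑ d : κ, ∑ b : ι, f a b c d := fun a => sum_comm3 _
  simp_rw [h1]
  exact sum_comm3 _

private lemma sum_sum_conj_mul {m' : ℕ} (γ γ' : Matrix (Fin m') (Fin m') ℂ) :
    ∑ i0 : Fin m', ∑ i : Fin m', conj (γ i i0) * γ' i i0 = (γᴴ * γ').trace := by
  simp only [Matrix.trace, Matrix.diag, Matrix.mul_apply, Matrix.conjTranspose_apply,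
    starRingEnd_apply]

/-- unitary amplification is an isometry (squared-norm version) -/
private lemma sum_norm_sq_amplify {m' : ℕ} (γ : Matrix (Fin m') (Fin m') ℂ)
    (hγ : γᴴ * γ = 1) (ξ : Fin m' → E) :
    ∑ i, ‖∑ l, γ i l • ξ l‖ ^ 2 = ∑ l, ‖ξ l‖ ^ 2 := by
  have hC : (∑ i, ((‖∑ l, γ i l • ξ l‖ ^ 2 : ℝ) : ℂ)) = ∑ l, ((‖ξ l‖ ^ 2 : ℝ) : ℂ) := by
    calc (∑ i, ((‖∑ l, γ i l • ξ l‖ ^ 2 : ℝ) : ℂ))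
        = ∑ i, ⟪∑ l, γ i l • ξ l, ∑ l, γ i l • ξ l⟫ := by
          refine Finset.sum_congr rfl fun i _ => ?_
          rw [inner_self_eq_norm_sq_to_K]; push_cast; rfl
      _ = ∑ i : Fin m', ∑ l, ∑ l', conj (γ i l) * γ i l' * ⟪ξ l, ξ l'⟫ := by
          simp_rw [inner_sum_smul_sum_smul]
      _ = ∑ l, ∑ l', (∑ i : Fin m', conj (γ i l) * γ i l') * ⟪ξ l, ξ l'⟫ := by
          rw [sum_comm3]; simp_rw [Finset.sum_mul]
      _ = ∑ l, ∑ l', (γᴴ * γ) l l' * ⟪ξ l, ξ l'⟫ := by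
          simp only [Matrix.mul_apply, Matrix.conjTranspose_apply, starRingEnd_apply]
      _ = ∑ l, ⟪ξ l, ξ l⟫ := by
          rw [hγ]; simp [Matrix.one_apply, ite_mul]
      _ = ∑ l, ((‖ξ l‖ ^ 2 : ℝ) : ℂ) := by
          refine Finset.sum_congr rfl fun l _ => ?_
          rw [inner_self_eq_norm_sq_to_K]; push_cast; rfl
  exact_mod_cast hC

end aux

section helpers
variable {E : Type*} [NormedAddCommGroup E] [InnerProductSpace ℂ E]

private lemma pilp_apply_norm_le {ι : Type*} [Fintype ι]
    (v : PiLp 2 (fun _ : ι => E)) (j : ι) : ‖v j‖ ≤ ‖v‖ := by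
  have h1 : ‖v j‖ ^ 2 ≤ ‖v‖ ^ 2 := by
    rw [PiLp.norm_sq_eq_of_L2]
    exact Finset.single_le_sum (f := fun i => ‖v i‖ ^ 2) (fun i _ => sq_nonneg _)
      (Finset.mem_univ j)
  exact le_of_pow_le_pow_left₀ two_ne_zero (norm_nonneg _) h1

private lemma pilp_sum_apply {ι κ : Type*} [Fintype ι]
    (f : ι → PiLp 2 (fun _ : κ => E)) (i : κ) :
    (∑ j, f j) i = ∑ j, f j i :=
  by rw [WithLp.ofLp_sum, Finset.sum_apply]

end helpers

local notation "⟪" x ", " y "⟫" => @inner ℂ _ _ x y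

set_option maxHeartbeats 2000000 in
set_option synthInstance.maxHeartbeats 1000000 in
/-- Key estimate comparing the Lipschitz seminorms of two curved Dirac operators:
`|L_H(T) − L_{H'}(T)| ≤ n ‖1 − H' H⁻¹‖ L_H(T)`. -/
theorem abs_seminorm_sub_le_curved {E : Type*} [NormedAddCommGroup E]
    [InnerProductSpace ℂ E] [CompleteSpace E]
    (n m : ℕ) (hn : 1 ≤ n) (hm : 1 ≤ m)
    (γ : Fin n → Matrix (Fin m) (Fin m) ℂ)
    (hsa : ∀ j, (γ j)ᴴ = γ j)
    (hunit : ∀ j, γ j * γ j = 1)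
    (hanti : ∀ j k, j ≠ k → γ j * γ k = -(γ k * γ j))
    (h h' : Fin n → Fin n → E →L[ℂ] E)
    (H H' Hinv : PiLp 2 (fun _ : Fin n => E) →L[ℂ] PiLp 2 (fun _ : Fin n => E))
    (hH : ∀ (x : PiLp 2 (fun _ : Fin n => E)) (j : Fin n), H x j = ∑ k, h k j (x k))
    (hH' : ∀ (x : PiLp 2 (fun _ : Fin n => E)) (j : Fin n), H' x j = ∑ k, h' k j (x k))
    (hHinv1 : H * Hinv = 1) (hHinv2 : Hinv * H = 1)
    (hH'unit : IsUnit H')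
    (T : Fin n → E →L[ℂ] E)
    (XH XH' : PiLp 2 (fun _ : Fin m => E) →L[ℂ] PiLp 2 (fun _ : Fin m => E))
    (hXH : ∀ (ξ : PiLp 2 (fun _ : Fin m => E)) (i : Fin m),
      XH ξ i = ∑ j, ∑ l, γ j i l • (∑ k, h k j * T k) (ξ l))
    (hXH' : ∀ (ξ : PiLp 2 (fun _ : Fin m => E)) (i : Fin m),
      XH' ξ i = ∑ j, ∑ l, γ j i l • (∑ k, h' k j * T k) (ξ l)) :
    |‖XH‖ - ‖XH'‖| ≤ (n : ℝ) * ‖1 - H' * Hinv‖ * ‖XH‖ := by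
  classical
  let S : Fin n → E →L[ℂ] E := fun j => ∑ k, h k j * T k
  let S' : Fin n → E →L[ℂ] E := fun j => ∑ k, h' k j * T k
  have hXH2 : ∀ (ξ : PiLp 2 (fun _ : Fin m => E)) (i : Fin m),
      XH ξ i = ∑ j, ∑ l, γ j i l • S j (ξ l) := hXH
  have hXH'2 : ∀ (ξ : PiLp 2 (fun _ : Fin m => E)) (i : Fin m),
      XH' ξ i = ∑ j, ∑ l, γ j i l • S' j (ξ l) := hXH'
  have hSapp : ∀ j y, S j y = ∑ k, h k j (T k y) := by
    intro j y
    simp only [S, ContinuousLinearMap.sum_apply, ContinuousLinearMap.mul_apply]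
  have hS'app : ∀ j y, S' j y = ∑ k, h' k j (T k y) := by
    intro j y
    simp only [S', ContinuousLinearMap.sum_apply, ContinuousLinearMap.mul_apply]
  have hγ1 : ∀ j, (γ j)ᴴ * γ j = 1 := fun j => by rw [hsa]; exact hunit j
  have htr : ∀ j j', ((γ j)ᴴ * γ j').trace = if j = j' then (m : ℂ) else 0 := by
    intro j j'
    rw [hsa]
    by_cases hjj : j = j'
    · subst hjj
      simp [hunit j, Matrix.trace_one]
    · rw [if_neg hjj]
      have h2 : (γ j * γ j').trace = -((γ j * γ j').trace) := by
        conv_lhs => rw [hanti j j' hjj]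
        rw [Matrix.trace_neg, Matrix.trace_mul_comm]
      linear_combination h2 / 2
  -- Step A
  have stepA : ∀ x : E, ∑ j, ‖S j x‖ ^ 2 ≤ ‖XH‖ ^ 2 * ‖x‖ ^ 2 := by
    intro x
    set ζ : Fin m → PiLp 2 (fun _ : Fin m => E) :=
      fun i0 => (WithLp.equiv 2 (∀ _ : Fin m, E)).symm (Pi.single i0 x) with hζ
    have hζapp : ∀ i0 l, ζ i0 l = if l = i0 then x else 0 := by
      intro i0 l
      rw [hζ]
      simp [WithLp.equiv_symm_apply, PiLp.toLp_apply, Pi.single_apply]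
    have hζnorm : ∀ i0, ‖ζ i0‖ ^ 2 = ‖x‖ ^ 2 := by
      intro i0
      rw [PiLp.norm_sq_eq_of_L2]
      simp [hζapp, apply_ite (‖·‖), apply_ite (· ^ 2 : ℝ → ℝ)]
    have hcomp : ∀ i0 i, XH (ζ i0) i = ∑ j, γ j i i0 • S j x := by
      intro i0 i
      rw [hXH2]
      refine Finset.sum_congr rfl fun j _ => ?_
      rw [Finset.sum_eq_single i0]
      · rw [hζapp]; simp
      · intro l _ hl; rw [hζapp]; simp [hl]
      · simp
    have hkey : (m : ℝ) * ∑ j, ‖S j x‖ ^ 2 = ∑ i0, ‖XH (ζ i0)‖ ^ 2 := by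
      have hnorm : ∀ i0, ‖XH (ζ i0)‖ ^ 2 = ∑ i, ‖∑ j, γ j i i0 • S j x‖ ^ 2 := by
        intro i0
        rw [PiLp.norm_sq_eq_of_L2]
        exact Finset.sum_congr rfl fun i _ => by rw [hcomp]
      simp_rw [hnorm]
      have hC : (∑ i0 : Fin m, ∑ i : Fin m, ((‖∑ j, γ j i i0 • S j x‖ ^ 2 : ℝ) : ℂ))
          = (m : ℂ) * ∑ j, ((‖S j x‖ ^ 2 : ℝ) : ℂ) := by
        calc (∑ i0 : Fin m, ∑ i : Fin m, ((‖∑ j, γ j i i0 • S j x‖ ^ 2 : ℝ) : ℂ))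
            = ∑ i0 : Fin m, ∑ i : Fin m, ⟪∑ j, γ j i i0 • S j x, ∑ j, γ j i i0 • S j x⟫ := by
              refine Finset.sum_congr rfl fun i0 _ => Finset.sum_congr rfl fun i _ => ?_
              rw [inner_self_eq_norm_sq_to_K]; push_cast; rfl
          _ = ∑ i0 : Fin m, ∑ i : Fin m, ∑ j, ∑ j',
                conj (γ j i i0) * γ j' i i0 * ⟪S j x, S j' x⟫ := by
              simp_rw [inner_sum_smul_sum_smul]
          _ = ∑ j, ∑ j', ∑ i0 : Fin m, ∑ i : Fin m,
                conj (γ j i i0) * γ j' i i0 * ⟪S j x, S j' x⟫ :=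
              sum_comm4 _
          _ = ∑ j, ∑ j', (∑ i0 : Fin m, ∑ i : Fin m,
                conj (γ j i i0) * γ j' i i0) * ⟪S j x, S j' x⟫ := by
              simp_rw [Finset.sum_mul]
          _ = ∑ j, ∑ j', ((γ j)ᴴ * γ j').trace * ⟪S j x, S j' x⟫ := by
              simp_rw [sum_sum_conj_mul]
          _ = ∑ j, (m : ℂ) * ⟪S j x, S j x⟫ := by
              simp_rw [htr]
              simp [ite_mul]
          _ = (m : ℂ) * ∑ j, ((‖S j x‖ ^ 2 : ℝ) : ℂ) := by
              rw [Finset.mul_sum]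
              refine Finset.sum_congr rfl fun j _ => ?_
              rw [inner_self_eq_norm_sq_to_K]; push_cast; rfl
      exact_mod_cast hC.symm
    have hbound : ∑ i0, ‖XH (ζ i0)‖ ^ 2 ≤ (m : ℝ) * (‖XH‖ ^ 2 * ‖x‖ ^ 2) := by
      calc ∑ i0, ‖XH (ζ i0)‖ ^ 2 ≤ ∑ _i0 : Fin m, ‖XH‖ ^ 2 * ‖x‖ ^ 2 := by
            refine Finset.sum_le_sum fun i0 _ => ?_
            have h1 := XH.le_opNorm (ζ i0)
            have h2 : ‖XH (ζ i0)‖ ^ 2 ≤ (‖XH‖ * ‖ζ i0‖) ^ 2 :=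
              pow_le_pow_left₀ (norm_nonneg _) h1 2
            rw [mul_pow, hζnorm] at h2
            exact h2
        _ = (m : ℝ) * (‖XH‖ ^ 2 * ‖x‖ ^ 2) := by
            simp [Finset.sum_const, Finset.card_univ]
    have hm0 : (0 : ℝ) < m := by exact_mod_cast hm
    refine le_of_mul_le_mul_left ?_ hm0
    rw [hkey]
    exact hbound
  -- Step B
  have hAH : (1 - H' * Hinv) * H = H - H' := by
    rw [sub_mul, one_mul, mul_assoc, hHinv2, mul_one]
  have stepB : ∀ (x : E) (j : Fin n),
      ‖S j x - S' j x‖ ≤ ‖1 - H' * Hinv‖ * (‖XH‖ * ‖x‖) := by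
    intro x j
    set w : PiLp 2 (fun _ : Fin n => E) :=
      (WithLp.equiv 2 (∀ _ : Fin n, E)).symm (fun k => T k x) with hw
    have hwk : ∀ k, w k = T k x := fun k => rfl
    have hHw : ∀ l, H w l = S l x := by
      intro l
      rw [hH, hSapp]
      exact Finset.sum_congr rfl fun k _ => by rw [hwk]
    have hH'w : H' w j = S' j x := by
      rw [hH', hS'app]
      exact Finset.sum_congr rfl fun k _ => by rw [hwk]
    have heq : S j x - S' j x = ((1 - H' * Hinv) (H w)) j := by
      have h2 : (1 - H' * Hinv) (H w) = H w - H' w := by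
        have h3 : ((1 - H' * Hinv) * H) w = (H - H') w := by rw [hAH]
        rw [ContinuousLinearMap.mul_apply] at h3
        rw [h3, ContinuousLinearMap.sub_apply]
      rw [h2, PiLp.sub_apply, hHw, hH'w]
    rw [heq]
    have hHwnorm : ‖H w‖ ≤ ‖XH‖ * ‖x‖ := by
      have h4 : ‖H w‖ ^ 2 ≤ (‖XH‖ * ‖x‖) ^ 2 := by
        rw [PiLp.norm_sq_eq_of_L2, mul_pow]
        calc ∑ l, ‖H w l‖ ^ 2 = ∑ l, ‖S l x‖ ^ 2 :=
              Finset.sum_congr rfl fun l _ => by rw [hHw]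
          _ ≤ ‖XH‖ ^ 2 * ‖x‖ ^ 2 := stepA x
      exact le_of_pow_le_pow_left₀ two_ne_zero (by positivity) h4
    calc ‖((1 - H' * Hinv) (H w)) j‖ ≤ ‖(1 - H' * Hinv) (H w)‖ :=
          pilp_apply_norm_le _ j
      _ ≤ ‖1 - H' * Hinv‖ * ‖H w‖ := (1 - H' * Hinv).le_opNorm _
      _ ≤ ‖1 - H' * Hinv‖ * (‖XH‖ * ‖x‖) :=
          mul_le_mul_of_nonneg_left hHwnorm (by positivity)
  -- Step C
  have stepC : ‖XH - XH'‖ ≤ (n : ℝ) * ‖1 - H' * Hinv‖ * ‖XH‖ := by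
    refine ContinuousLinearMap.opNorm_le_bound _ (by positivity) fun ξ => ?_
    set D : Fin n → E →L[ℂ] E := fun j => S j - S' j with hD
    set v : Fin n → PiLp 2 (fun _ : Fin m => E) :=
      fun j => (WithLp.equiv 2 (∀ _ : Fin m, E)).symm
        (fun i => D j (∑ l, γ j i l • ξ l)) with hv
    have hvji : ∀ j i, v j i = ∑ l, γ j i l • (S j (ξ l) - S' j (ξ l)) := by
      intro j i
      have h7 : v j i = D j (∑ l, γ j i l • ξ l) := rfl
      rw [h7, map_sum]
      refine Finset.sum_congr rfl fun l _ => ?_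
      rw [map_smul]
      congr 1
    have hsplit : (XH - XH') ξ = ∑ j, v j := by
      apply WithLp.ofLp_injective; funext i
      rw [pilp_sum_apply]
      rw [ContinuousLinearMap.sub_apply, PiLp.sub_apply, hXH2, hXH'2,
        ← Finset.sum_sub_distrib]
      refine Finset.sum_congr rfl fun j _ => ?_
      rw [hvji]
      simp [smul_sub, Finset.sum_sub_distrib]
    have hvnorm : ∀ j, ‖v j‖ ≤ ‖1 - H' * Hinv‖ * (‖XH‖ * ‖ξ‖) := by
      intro j
      have h5 : ‖v j‖ ^ 2 ≤ (‖1 - H' * Hinv‖ * (‖XH‖ * ‖ξ‖)) ^ 2 := by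
        rw [PiLp.norm_sq_eq_of_L2]
        have h6 : ∀ i : Fin m, ‖v j i‖ ^ 2
            ≤ (‖1 - H' * Hinv‖ * ‖XH‖) ^ 2 * ‖∑ l, γ j i l • ξ l‖ ^ 2 := by
          intro i
          have h7 : v j i = D j (∑ l, γ j i l • ξ l) := rfl
          rw [h7]
          have h8 : ‖D j (∑ l, γ j i l • ξ l)‖
              ≤ ‖1 - H' * Hinv‖ * (‖XH‖ * ‖∑ l, γ j i l • ξ l‖) := by
            have h9 : D j (∑ l, γ j i l • ξ l)
                = S j (∑ l, γ j i l • ξ l) - S' j (∑ l, γ j i l • ξ l) := rfl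
            rw [h9]
            exact stepB _ j
          calc ‖D j (∑ l, γ j i l • ξ l)‖ ^ 2
              ≤ (‖1 - H' * Hinv‖ * (‖XH‖ * ‖∑ l, γ j i l • ξ l‖)) ^ 2 :=
                pow_le_pow_left₀ (norm_nonneg _) h8 2
            _ = (‖1 - H' * Hinv‖ * ‖XH‖) ^ 2 * ‖∑ l, γ j i l • ξ l‖ ^ 2 := by ring
        calc ∑ i, ‖v j i‖ ^ 2
            ≤ ∑ i, (‖1 - H' * Hinv‖ * ‖XH‖) ^ 2 * ‖∑ l, γ j i l • ξ l‖ ^ 2 :=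
              Finset.sum_le_sum fun i _ => h6 i
          _ = (‖1 - H' * Hinv‖ * ‖XH‖) ^ 2 * ∑ i, ‖∑ l, γ j i l • ξ l‖ ^ 2 := by
              rw [Finset.mul_sum]
          _ = (‖1 - H' * Hinv‖ * ‖XH‖) ^ 2 * ∑ l, ‖ξ l‖ ^ 2 := by
              rw [sum_norm_sq_amplify (γ j) (hγ1 j)]
          _ = (‖1 - H' * Hinv‖ * (‖XH‖ * ‖ξ‖)) ^ 2 := by
              rw [← PiLp.norm_sq_eq_of_L2]; ring
      exact le_of_pow_le_pow_left₀ two_ne_zero (by positivity) h5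
    calc ‖(XH - XH') ξ‖ = ‖∑ j, v j‖ := by rw [hsplit]
      _ ≤ ∑ j, ‖v j‖ := norm_sum_le _ _
      _ ≤ ∑ _j : Fin n, ‖1 - H' * Hinv‖ * (‖XH‖ * ‖ξ‖) :=
          Finset.sum_le_sum fun j _ => hvnorm j
      _ = (n : ℝ) * ‖1 - H' * Hinv‖ * ‖XH‖ * ‖ξ‖ := by
          simp [Finset.sum_const, Finset.card_univ]; ring
  calc |‖XH‖ - ‖XH'‖| ≤ ‖XH - XH'‖ := abs_norm_sub_norm_le XH XH'
    _ ≤ (n : ℝ) * ‖1 - H' * Hinv‖ * ‖XH‖ := stepC
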